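/- Assume 𝐌 : I^p → I^p is a mean-type mapping and K : I^p → I is its unique 𝐌-invariant mean. If F : I^p → ℝ is reflexive (F(t,…,t) = t for all t ∈ I), continuous at every point of the diagonal Δ(I^p) := {(u₁,…,u_p) ∈ I^p : u₁ = … = u_p}, and satisfies F ∘ 𝐌 = F, then F = K. -/

import Mathlib

open Filter Set Topology

/-- `M` is a mean on the interval `I` (for `p`-tuples): its value is between the
minimum and the maximum of the arguments, for every tuple with entries in `I`. -/
def IsMean (I : Set ℝ) (p : ℕ) (M : (Fin p → ℝ) → ℝ) : Prop :=
  ∀ v : Fin p → ℝ, (∀ i, v i ∈ I) →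
    sInf (Set.range v) ≤ M v ∧ M v ≤ sSup (Set.range v)

/-- A mean-type mapping: every coordinate function is a mean on `I`, and it maps
`I^p` into `I^p`. -/
def IsMeanType (I : Set ℝ) (p : ℕ) (T : (Fin p → ℝ) → Fin p → ℝ) : Prop :=
  (∀ i, IsMean I p fun v => T v i) ∧
    ∀ v : Fin p → ℝ, (∀ i, v i ∈ I) → ∀ i, T v i ∈ I

/-- The unfolded orbit `O*_𝐌(v)`: the `(n*p + i)`-th term (`0 ≤ i < p`) is the
`i`-th coordinate of `𝐌ⁿ(v)`. -/
def orbitSeq (p : ℕ) (hp : 0 < p) (T : (Fin p → ℝ) → Fin p → ℝ)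
    (v : Fin p → ℝ) : ℕ → ℝ :=
  fun k => (T^[k / p] v) ⟨k % p, Nat.mod_lt k hp⟩

/-- If `K` is the unique `𝐌`-invariant mean and `F : I^p → ℝ`
is reflexive, continuous at every diagonal point and `𝐌`-invariant, then `F = K`. -/
theorem reflexive_invariant_eq_unique_invariant_mean
    {I : Set ℝ} (hne : I.Nonempty) (hI : I.OrdConnected)
    {p : ℕ} (hp : 2 ≤ p)
    (T : (Fin p → ℝ) → Fin p → ℝ) (hT : IsMeanType I p T)
    (K : (Fin p → ℝ) → ℝ) (hK : IsMean I p K)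
    (hKinv : ∀ v : Fin p → ℝ, (∀ i, v i ∈ I) → K (T v) = K v)
    (hKuniq : ∀ K' : (Fin p → ℝ) → ℝ, IsMean I p K' →
      (∀ v : Fin p → ℝ, (∀ i, v i ∈ I) → K' (T v) = K' v) →
      ∀ v : Fin p → ℝ, (∀ i, v i ∈ I) → K' v = K v)
    (F : (Fin p → ℝ) → ℝ)
    (hrefl : ∀ t ∈ I, F (fun _ => t) = t)
    (hF : ∀ t ∈ I, ContinuousWithinAt F {v : Fin p → ℝ | ∀ i, v i ∈ I}
      (fun _ => t))
    (hFinv : ∀ v : Fin p → ℝ, (∀ i, v i ∈ I) → F (T v) = F v) :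
    ∀ v : Fin p → ℝ, (∀ i, v i ∈ I) → F v = K v := by
  have hT1 : ∀ i, ∀ v : Fin p → ℝ, (∀ i, v i ∈ I) →
      sInf (Set.range v) ≤ T v i ∧ T v i ≤ sSup (Set.range v) := hT.1
  have hp0 : 0 < p := lt_of_lt_of_le two_pos hp
  haveI : Nonempty (Fin p) := ⟨⟨0, hp0⟩⟩
  -- basic facts about ranges
  have hrne : ∀ w : Fin p → ℝ, (Set.range w).Nonempty := fun w => Set.range_nonempty w
  have hrfin : ∀ w : Fin p → ℝ, (Set.range w).Finite := fun w => Set.finite_range w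
  have hbb : ∀ w : Fin p → ℝ, BddBelow (Set.range w) := fun w => (hrfin w).bddBelow
  have hba : ∀ w : Fin p → ℝ, BddAbove (Set.range w) := fun w => (hrfin w).bddAbove
  -- iterates stay good
  have hgood : ∀ w : Fin p → ℝ, (∀ i, w i ∈ I) → ∀ n i, T^[n] w i ∈ I := by
    intro w hw n
    induction n with
    | zero => simpa using hw
    | succ n ih =>
      intro i
      rw [Function.iterate_succ_apply']
      exact hT.2 _ ih i
  set mn : (Fin p → ℝ) → ℕ → ℝ := fun w n => sInf (Set.range (T^[n] w)) with hmn
  set mx : (Fin p → ℝ) → ℕ → ℝ := fun w n => sSup (Set.range (T^[n] w)) with hmx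
  have hstep_lo : ∀ w : Fin p → ℝ, (∀ i, w i ∈ I) → sInf (Set.range w) ≤ sInf (Set.range (T w)) := by
    intro w hw
    refine le_csInf (hrne _) ?_
    rintro b ⟨i, rfl⟩
    exact (hT1 i w hw).1
  have hstep_hi : ∀ w : Fin p → ℝ, (∀ i, w i ∈ I) → sSup (Set.range (T w)) ≤ sSup (Set.range w) := by
    intro w hw
    refine csSup_le (hrne _) ?_
    rintro b ⟨i, rfl⟩
    exact (hT1 i w hw).2
  have hmono : ∀ w : Fin p → ℝ, (∀ i, w i ∈ I) → Monotone (mn w) := by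
    intro w hw
    refine monotone_nat_of_le_succ fun n => ?_
    simp only [hmn, Function.iterate_succ_apply']
    exact hstep_lo _ (hgood w hw n)
  have hanti : ∀ w : Fin p → ℝ, (∀ i, w i ∈ I) → Antitone (mx w) := by
    intro w hw
    refine antitone_nat_of_succ_le fun n => ?_
    simp only [hmx, Function.iterate_succ_apply']
    exact hstep_hi _ (hgood w hw n)
  have hlemx : ∀ (w : Fin p → ℝ) n, mn w n ≤ mx w n := fun w n =>
    csInf_le_csSup (hrne _) (hbb _) (hba _)
  have hbdA : ∀ w : Fin p → ℝ, (∀ i, w i ∈ I) → BddAbove (Set.range (mn w)) := by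
    intro w hw
    refine ⟨mx w 0, ?_⟩
    rintro b ⟨n, rfl⟩
    exact (hlemx w n).trans (hanti w hw (Nat.zero_le n))
  have hbdB : ∀ w : Fin p → ℝ, (∀ i, w i ∈ I) → BddBelow (Set.range (mx w)) := by
    intro w hw
    refine ⟨mn w 0, ?_⟩
    rintro b ⟨n, rfl⟩
    exact (hmono w hw (Nat.zero_le n)).trans (hlemx w n)
  set Kmin : (Fin p → ℝ) → ℝ := fun w => ⨆ n, mn w n with hKmin
  set Kmax : (Fin p → ℝ) → ℝ := fun w => ⨅ n, mx w n with hKmax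
  have hKminMean : ∀ w : Fin p → ℝ, (∀ i, w i ∈ I) →
      sInf (Set.range w) ≤ Kmin w ∧ Kmin w ≤ sSup (Set.range w) := by
    intro w hw
    constructor
    · have := le_ciSup (hbdA w hw) 0
      simpa [hmn] using this
    · refine ciSup_le fun n => ?_
      have := (hlemx w n).trans (hanti w hw (Nat.zero_le n))
      simpa [hmx] using this
  have hKmaxMean : ∀ w : Fin p → ℝ, (∀ i, w i ∈ I) →
      sInf (Set.range w) ≤ Kmax w ∧ Kmax w ≤ sSup (Set.range w) := by
    intro w hw
    constructor
    · refine le_ciInf fun n => ?_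
      have := (hmono w hw (Nat.zero_le n)).trans (hlemx w n)
      simpa [hmn] using this
    · have := ciInf_le (hbdB w hw) 0
      simpa [hmx] using this
  have hshift_mn : ∀ (w : Fin p → ℝ) n, mn (T w) n = mn w (n + 1) := by
    intro w n
    simp only [hmn, Function.iterate_succ_apply]
  have hshift_mx : ∀ (w : Fin p → ℝ) n, mx (T w) n = mx w (n + 1) := by
    intro w n
    simp only [hmx, Function.iterate_succ_apply]
  have hKminInv : ∀ w : Fin p → ℝ, (∀ i, w i ∈ I) → Kmin (T w) = Kmin w := by
    intro w hw
    have hb := hbdA w hw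
    apply le_antisymm
    · refine ciSup_le fun n => ?_
      rw [hshift_mn]
      exact le_ciSup hb (n + 1)
    · refine ciSup_le fun n => ?_
      have : mn w n ≤ mn (T w) n := by
        rw [hshift_mn]; exact hmono w hw (Nat.le_succ n)
      refine this.trans (le_ciSup ?_ n)
      refine ⟨mx w 0, ?_⟩
      rintro b ⟨m, rfl⟩
      rw [hshift_mn]
      exact (hlemx w (m+1)).trans (hanti w hw (Nat.zero_le _))
  have hKmaxInv : ∀ w : Fin p → ℝ, (∀ i, w i ∈ I) → Kmax (T w) = Kmax w := by
    intro w hw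
    have hb := hbdB w hw
    apply le_antisymm
    · refine le_ciInf fun n => ?_
      have : mx (T w) n ≤ mx w n := by
        rw [hshift_mx]; exact hanti w hw (Nat.le_succ n)
      refine (ciInf_le ?_ n).trans this
      refine ⟨mn w 0, ?_⟩
      rintro b ⟨m, rfl⟩
      show mn w 0 ≤ mx (T w) m
      rw [hshift_mx]
      exact (hmono w hw (Nat.zero_le _)).trans (hlemx w (m+1))
    · refine le_ciInf fun n => ?_
      rw [hshift_mx]
      exact ciInf_le hb (n + 1)
  intro v hv
  have hKminK : Kmin v = K v := hKuniq Kmin hKminMean hKminInv v hv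
  have hKmaxK : Kmax v = K v := hKuniq Kmax hKmaxMean hKmaxInv v hv
  -- limits
  have hTmn : Tendsto (mn v) atTop (nhds (K v)) := by
    rw [← hKminK]
    exact tendsto_atTop_ciSup (hmono v hv) (hbdA v hv)
  have hTmx : Tendsto (mx v) atTop (nhds (K v)) := by
    rw [← hKmaxK]
    exact tendsto_atTop_ciInf (hanti v hv) (hbdB v hv)
  set seq : ℕ → Fin p → ℝ := fun n => T^[n] v with hseq
  have hseqT : Tendsto seq atTop (nhds (fun _ => K v)) := by
    rw [tendsto_pi_nhds]
    intro i
    refine tendsto_of_tendsto_of_tendsto_of_le_of_le hTmn hTmx ?_ ?_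
    · intro n; exact csInf_le (hbb _) ⟨i, rfl⟩
    · intro n; exact le_csSup (hba _) ⟨i, rfl⟩
  -- K v ∈ I
  have hKvI : K v ∈ I := by
    have h0' : sInf (Set.range v) ∈ I := by
      obtain ⟨j, hj⟩ := (hrne v).csInf_mem (hrfin v)
      rw [← hj]; exact hv j
    have h1' : sSup (Set.range v) ∈ I := by
      obtain ⟨j, hj⟩ := (hrne v).csSup_mem (hrfin v)
      rw [← hj]; exact hv j
    exact hI.out h0' h1' ⟨(hK v hv).1, (hK v hv).2⟩
  -- continuity
  have hc := hF (K v) hKvI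
  have hwithin : Tendsto seq atTop (nhdsWithin (fun _ => K v) {v : Fin p → ℝ | ∀ i, v i ∈ I}) :=
    tendsto_nhdsWithin_of_tendsto_nhds_of_eventually_within seq hseqT
      (Filter.Eventually.of_forall fun n => hgood v hv n)
  have hFc : Tendsto (fun n => F (seq n)) atTop (nhds (K v)) := by
    have := hc.tendsto.comp hwithin
    rwa [hrefl (K v) hKvI] at this
  have hFconst : ∀ n, F (seq n) = F v := by
    intro n
    induction n with
    | zero => rfl
    | succ n ih =>
      have : seq (n+1) = T (seq n) := by simp [hseq, Function.iterate_succ_apply']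
      rw [this, hFinv _ (hgood v hv n), ih]
  have : Tendsto (fun _ : ℕ => F v) atTop (nhds (K v)) := by
    simpa [hFconst] using hFc
  exact tendsto_nhds_unique tendsto_const_nhds this
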